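/- Let k be a field and A an associative unital k-algebra whose center Z is a finitely generated k-algebra, and such that A is finitely generated as a Z-module. Then every simple (right) A-module is finite-dimensional over k. -/

import Mathlib

/-- Helper: abstract form. -/
theorem aux_finite_of_simple
    (k : Type*) [Field k]
    (R : Type*) [CommRing R] [Algebra k R] [Algebra.FiniteType k R]
    (S : Type*) [Ring S]
    (M : Type*) [AddCommGroup M] [Module S M] [IsSimpleModule S M]
    [Module R M] [Module k M] [IsScalarTower k R M] [SMulCommClass R S M]
    [Module.Finite R M] : Module.Finite k M := by
  classical
  set I : Ideal R := Module.annihilator R M with hI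
  have hnt : Nontrivial M := IsSimpleModule.nontrivial S M
  -- every z ∉ I acts bijectively
  have hbij : ∀ z : R, z ∉ I → Function.Bijective (fun m : M => z • m) := by
    intro z hz
    have hφ : ∃ φ : M →ₗ[S] M, ∀ m, φ m = z • m := by
      refine ⟨⟨⟨fun m => z • m, smul_add z⟩, fun s m => smul_comm z s m⟩, fun m => rfl⟩
    obtain ⟨φ, hφ⟩ := hφ
    have hne : φ ≠ 0 := by
      intro h
      apply hz
      rw [hI, Module.mem_annihilator]
      intro m
      have := congrArg (fun f : M →ₗ[S] M => f m) h
      simpa [hφ] using this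
    have := LinearMap.bijective_of_ne_zero hne
    simpa [hφ, Function.Bijective, Function.Injective, Function.Surjective] using this
  -- I is maximal
  have hmax : I.IsMaximal := by
    apply Ideal.Quotient.maximal_of_isField
    constructor
    · -- exists pair of unequal elements
      have h1 : (1 : R) ∉ I := by
        rw [hI, Module.mem_annihilator]
        intro h
        obtain ⟨m, hm⟩ := exists_ne (0 : M)
        exact hm (by simpa using h m)
      exact ⟨1, 0, by
        intro h
        exact h1 ((Ideal.Quotient.eq_zero_iff_mem).mp (by simpa using h))⟩
    · exact mul_comm
    · intro a ha
      obtain ⟨z, rfl⟩ := Ideal.Quotient.mk_surjective a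
      have hz : z ∉ I := fun h => ha (Ideal.Quotient.eq_zero_iff_mem.mpr h)
      -- Nakayama: M = span{z} • M
      have hle : (⊤ : Submodule R M) ≤ Ideal.span {z} • ⊤ := by
        intro m _
        obtain ⟨m', hm'⟩ := (hbij z hz).2 m
        rw [← hm']
        exact Submodule.smul_mem_smul (Ideal.subset_span rfl) trivial
      obtain ⟨r, hr1, hr2⟩ :=
        Submodule.exists_sub_one_mem_and_smul_eq_zero_of_fg_of_le_smul (Ideal.span {z})
          ⊤ (Module.Finite.fg_top) hle
      have hrI : r ∈ I := by
        rw [hI, Module.mem_annihilator]; intro m; exact hr2 m trivial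
      obtain ⟨y, hy⟩ := Ideal.mem_span_singleton'.mp hr1
      refine ⟨Ideal.Quotient.mk I (-y), ?_⟩
      have : Ideal.Quotient.mk I (r - 1) = Ideal.Quotient.mk I (y * z) := by rw [hy]
      rw [map_sub] at this
      rw [Ideal.Quotient.eq_zero_iff_mem.mpr hrI] at this
      calc Ideal.Quotient.mk I z * Ideal.Quotient.mk I (-y)
          = -(Ideal.Quotient.mk I (y * z)) := by rw [← map_mul, ← map_neg]; ring_nf
        _ = 1 := by rw [← this]; simp
  -- the quotient field
  letI : Field (R ⧸ I) := Ideal.Quotient.field I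
  haveI : Algebra.FiniteType k (R ⧸ I) :=
    Algebra.FiniteType.of_surjective
      (Ideal.Quotient.mkₐ k I) (Ideal.Quotient.mkₐ_surjective k I)
  haveI : Module.Finite k (R ⧸ I) := finite_of_finite_type_of_isJacobsonRing k (R ⧸ I)
  -- M as R⧸I module
  have htor : Module.IsTorsionBySet R M I := by
    intro m a
    exact (Module.mem_annihilator.mp a.2) m
  letI : Module (R ⧸ I) M := htor.module
  haveI : IsScalarTower k (R ⧸ I) M := htor.isScalarTower
  haveI : IsScalarTower R (R ⧸ I) M := htor.isScalarTower
  haveI : Module.Finite (R ⧸ I) M := by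
    obtain ⟨s, hs⟩ := Module.Finite.fg_top (R := R) (M := M)
    refine ⟨⟨s, eq_top_iff.mpr fun m _ => ?_⟩⟩
    have hm : m ∈ Submodule.span R (s : Set M) := hs ▸ Submodule.mem_top
    exact Submodule.span_le_restrictScalars R (R ⧸ I) (s : Set M) hm
  exact Module.Finite.trans (R ⧸ I) M

/-- Let `A` be an associative unital `k`-algebra whose center is a finitely generated
commutative `k`-algebra, and suppose `A` is finitely generated as a module over its center.
Then every simple right `A`-module (i.e. simple left `Aᵐᵒᵖ`-module) is finite-dimensional
over `k`. -/
theorem simple_module_finiteDimensional_of_center_finiteType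
    (k : Type*) [Field k]
    (A : Type*) [Ring A] [Algebra k A]
    [Algebra.FiniteType k (Subalgebra.center k A)]
    [Module.Finite (Subalgebra.center k A) A]
    (M : Type*) [AddCommGroup M] [Module Aᵐᵒᵖ M] [IsSimpleModule Aᵐᵒᵖ M]
    [Module k M] [IsScalarTower k Aᵐᵒᵖ M] :
    FiniteDimensional k M := by
  set Z := Subalgebra.center k A with hZ
  have hcomm : ∀ (z : Z) (a : A), a * (z : A) = (z : A) * a := fun z a =>
    Subalgebra.mem_center_iff.mp z.2 a
  let f : Z →+* Aᵐᵒᵖ :=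
    { toFun := fun z => MulOpposite.op (z : A)
      map_one' := rfl
      map_mul' := fun z w => by
        apply MulOpposite.unop_injective
        show ((z : A) * (w : A)) = (w : A) * (z : A)
        exact (hcomm z (w : A)).symm
      map_zero' := rfl
      map_add' := fun z w => rfl }
  have hfc : ∀ (z : Z) (b : Aᵐᵒᵖ), f z * b = b * f z := by
    intro z b
    apply MulOpposite.unop_injective
    show b.unop * (z : A) = (z : A) * b.unop
    exact hcomm z b.unop
  letI : Module Z M := Module.compHom M f
  haveI : SMulCommClass Z Aᵐᵒᵖ M :=
    ⟨fun z b m => by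
      show f z • (b • m) = b • (f z • m)
      rw [← mul_smul, ← mul_smul, hfc]⟩
  haveI : IsScalarTower k Z M :=
    ⟨fun c z m => by
      show f (c • z) • m = c • (f z • m)
      have h1 : f (c • z) = c • f z := by
        apply MulOpposite.unop_injective
        show ((c • z : Z) : A) = c • (z : A)
        rfl
      rw [h1, smul_assoc]⟩
  have hzb : ∀ (z : Z) (b : Aᵐᵒᵖ), z • b = f z * b := by
    intro z b
    rw [hfc]
    rfl
  haveI : IsScalarTower Z Aᵐᵒᵖ M :=
    ⟨fun z b m => by
      rw [hzb]
      show (f z * b) • m = f z • (b • m)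
      rw [mul_smul]⟩
  haveI : Module.Finite Z Aᵐᵒᵖ :=
    Module.Finite.equiv (M := A)
      { toFun := MulOpposite.op
        invFun := MulOpposite.unop
        left_inv := fun _ => rfl
        right_inv := fun _ => rfl
        map_add' := fun _ _ => rfl
        map_smul' := fun _ _ => rfl }
  haveI : Module.Finite Aᵐᵒᵖ M := by
    haveI : Nontrivial M := IsSimpleModule.nontrivial Aᵐᵒᵖ M
    obtain ⟨m, hm⟩ := exists_ne (0 : M)
    have hsp : Submodule.span Aᵐᵒᵖ ({m} : Set M) = ⊤ := by
      rcases eq_bot_or_eq_top (Submodule.span Aᵐᵒᵖ ({m} : Set M)) with h | h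
      · exact absurd (h ▸ Submodule.mem_span_singleton_self m) (by simpa using hm)
      · exact h
    exact ⟨⟨{m}, by simpa using hsp⟩⟩
  haveI : Module.Finite Z M := Module.Finite.trans Aᵐᵒᵖ M
  exact aux_finite_of_simple k Z Aᵐᵒᵖ M
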